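/- Let k be a complete non-archimedean field with 0 < |ϖ| < 1. Define sequences of positive integers a(n), b(n) recursively with a(1)=1, b(J) > J² + J·max{b(j): j<J; a(i): i≤J}, and a(I) > I² + I·max{b(j): j<I; a(i): i<I}. Let R = k[T,T⁻¹,Z] and R₀ the 𝒪_k-subalgebra generated by ϖT, ϖT⁻¹, and ϖ⁻ⁿT^{a(n)}Z, ϖ⁻ⁿT^{-b(n)}Z for n ≥ 1. Then for every e ≥ 1 there exists M(e) ≥ 0 such that ϖ^{-M(e)}Zᵉ ∉ R₀. -/

import Mathlib

namespace ZNN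


def tcon (a b : ℕ → ℕ) (t : ℕ × Bool) : ℤ := if t.2 then (a t.1 : ℤ) else -(b t.1 : ℤ)
def tval (a b : ℕ → ℕ) (t : ℕ × Bool) : ℕ := if t.2 then a t.1 else b t.1
def tpos (t : ℕ × Bool) : ℕ := if t.2 then 2 * t.1 - 1 else 2 * t.1
def tsum (a b : ℕ → ℕ) (s : Multiset (ℕ × Bool)) : ℤ := (s.map (tcon a b)).sum
def tlvl (s : Multiset (ℕ × Bool)) : ℕ := (s.map Prod.fst).sum

lemma abs_tcon (a b : ℕ → ℕ) (t : ℕ × Bool) : |tcon a b t| = (tval a b t : ℤ) := by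
  rcases t with ⟨n, _ | _⟩ <;> simp [tcon, tval]

lemma sum_map_le {α : Type*} (s : Multiset α) (f : α → ℤ) (c : ℤ)
    (h : ∀ u ∈ s, f u ≤ c) : (s.map f).sum ≤ (Multiset.card s : ℤ) * c := by
  induction s using Multiset.induction_on with
  | empty => simp
  | cons t s ih =>
    simp only [Multiset.map_cons, Multiset.sum_cons, Multiset.card_cons]
    have h1 := h t (Multiset.mem_cons_self t s)
    have h2 := ih (fun u hu => h u (Multiset.mem_cons_of_mem hu))
    push_cast
    linarith

lemma abs_tsum_le (a b : ℕ → ℕ) (s : Multiset (ℕ × Bool)) :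
    |tsum a b s| ≤ (s.map (fun t => (tval a b t : ℤ))).sum := by
  induction s using Multiset.induction_on with
  | empty => simp [tsum]
  | cons t s ih =>
    simp only [tsum, Multiset.map_cons, Multiset.sum_cons] at *
    calc |tcon a b t + (s.map (tcon a b)).sum| ≤ |tcon a b t| + |(s.map (tcon a b)).sum| :=
          abs_add_le _ _
    _ ≤ _ := by rw [abs_tcon]; exact add_le_add le_rfl ih

lemma exists_max {α : Type*} (f : α → ℕ) (s : Multiset α) (hs : s ≠ 0) :
    ∃ t ∈ s, ∀ u ∈ s, f u ≤ f t := by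
  induction s using Multiset.induction_on with
  | empty => exact absurd rfl hs
  | cons a s ih =>
    rcases eq_or_ne s 0 with rfl | h
    · refine ⟨a, Multiset.mem_cons_self a 0, fun u hu => ?_⟩
      rcases Multiset.mem_cons.mp hu with rfl | hu
      · exact le_rfl
      · simp at hu
    · obtain ⟨t, ht, hmax⟩ := ih h
      rcases le_total (f a) (f t) with hle | hle
      · refine ⟨t, Multiset.mem_cons_of_mem ht, fun u hu => ?_⟩
        rcases Multiset.mem_cons.mp hu with rfl | hu
        · exact hle
        · exact hmax u hu
      · refine ⟨a, Multiset.mem_cons_self a s, fun u hu => ?_⟩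
        rcases Multiset.mem_cons.mp hu with rfl | hu
        · exact le_rfl
        · exact (hmax u hu).trans hle

lemma tpos_inj {u v : ℕ × Bool} (hu : 1 ≤ u.1) (hv : 1 ≤ v.1) (h : tpos u = tpos v) : u = v := by
  rcases u with ⟨i, bi⟩; rcases v with ⟨j, bj⟩
  simp only [tpos] at h hu hv
  cases bi <;> cases bj <;> simp_all <;> omega

lemma arith (n k r V W L A : ℤ) (hn : 1 ≤ n) (hk : 1 ≤ k) (hr : 0 ≤ r) (hV : n^2 ≤ V)
    (hW0 : 0 ≤ W) (hWb : n*W ≤ r*(V - n^2 - 1)) (hL : L ≤ r*n) (hL0 : 0 ≤ L)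
    (hkV : k*V ≤ A + W) (hA : 0 ≤ A) : k*n + L ≤ A + (k+r)^2 := by
  rcases le_or_gt (k + r) n with hcase | hcase
  · have h1 : r + 1 ≤ k * n := by nlinarith
    have h3 : k * n * V - n * W ≤ n * A := by nlinarith
    have h4 : V * (k * n - r) + r * (n^2 + 1) ≤ n * A := by nlinarith
    have h5 : k * n^3 ≤ n * A := by nlinarith
    have h6 : k * n^2 ≤ A := by nlinarith
    nlinarith
  · nlinarith

section Key

variable (a b : ℕ → ℕ)
variable (ha1 : a 1 = 1)
variable (hb : ∀ J : ℕ, 1 ≤ J →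
      (∀ j : ℕ, 1 ≤ j → j < J → J ^ 2 + J * b j < b J) ∧
      (∀ i : ℕ, 1 ≤ i → i ≤ J → J ^ 2 + J * a i < b J))
variable (ha : ∀ I : ℕ, 2 ≤ I →
      (∀ j : ℕ, 1 ≤ j → j < I → I ^ 2 + I * b j < a I) ∧
      (∀ i : ℕ, 1 ≤ i → i < I → I ^ 2 + I * a i < a I))

include hb ha in
lemma dominance {tstar u : ℕ × Bool} (hn : 1 ≤ tstar.1) (hu : 1 ≤ u.1)
    (hlt : tpos u < tpos tstar) :
    tstar.1 ^ 2 + tstar.1 * tval a b u < tval a b tstar := by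
  rcases tstar with ⟨n, bn⟩; rcases u with ⟨i, bi⟩
  simp only at hn hu
  cases bn <;> cases bi <;>
    simp only [tpos, tval, Bool.false_eq_true, if_true, if_false, ite_true, ite_false] at hlt ⊢
  · exact (hb n hn).1 i hu (by omega)
  · exact (hb n hn).2 i hu (by omega)
  · exact (ha n (by omega)).1 i hu (by omega)
  · exact (ha n (by omega)).2 i hu (by omega)

include ha1 hb ha in
lemma sq_le_tval {t : ℕ × Bool} (ht : 1 ≤ t.1) : t.1 ^ 2 ≤ tval a b t := by
  rcases t with ⟨n, bn⟩
  simp only at ht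
  cases bn
  · have := (hb n ht).2 1 le_rfl ht
    rw [ha1] at this
    simp only [tval, Bool.false_eq_true, ite_false]
    omega
  · simp only [tval, ite_true]
    rcases Nat.lt_or_ge n 2 with h | h
    · interval_cases n
      simp [ha1]
    · have := (ha n h).2 1 le_rfl (by omega)
      rw [ha1] at this
      omega

include ha1 hb ha in
lemma key (s : Multiset (ℕ × Bool)) (hs : ∀ t ∈ s, 1 ≤ t.1) :
    (tlvl s : ℤ) ≤ |tsum a b s| + (Multiset.card s : ℤ) ^ 2 := by
  classical
  rcases eq_or_ne s 0 with rfl | hne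
  · simp [tlvl, tsum]
  obtain ⟨tstar, hts, hmax⟩ := exists_max tpos s hne
  have hn : 1 ≤ tstar.1 := hs tstar hts
  have hk : 1 ≤ s.count tstar := Multiset.one_le_count_iff_mem.mpr hts
  have hsplit : Multiset.replicate (s.count tstar) tstar + s.filter (fun u => ¬ u = tstar) = s := by
    rw [← Multiset.filter_eq' s tstar]
    exact Multiset.filter_add_not _ s
  set k : ℕ := s.count tstar
  set s₂ : Multiset (ℕ × Bool) := s.filter (fun u => ¬ u = tstar)
  set r : ℕ := Multiset.card s₂ with hr_def
  have hs₂mem : ∀ u ∈ s₂, u ∈ s ∧ u ≠ tstar := by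
    intro u hu
    rw [Multiset.mem_filter] at hu
    exact ⟨hu.1, hu.2⟩
  have hs₂lt : ∀ u ∈ s₂, tpos u < tpos tstar := by
    intro u hu
    obtain ⟨hus, hune⟩ := hs₂mem u hu
    rcases lt_or_eq_of_le (hmax u hus) with h | h
    · exact h
    · exact absurd (tpos_inj (hs u hus) hn h) hune
  have hVlb : ((tstar.1 : ℤ)) ^ 2 ≤ (tval a b tstar : ℤ) := by
    exact_mod_cast sq_le_tval a b ha1 hb ha hn
  have htsum : tsum a b s = (k : ℤ) * tcon a b tstar + tsum a b s₂ := by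
    rw [← hsplit]
    simp [tsum, Multiset.map_add, Multiset.sum_add, Multiset.map_replicate,
      Multiset.sum_replicate, nsmul_eq_mul]
  have htlvl : (tlvl s : ℤ) = (k : ℤ) * (tstar.1 : ℤ) + (tlvl s₂ : ℤ) := by
    conv_lhs => rw [← hsplit]
    simp only [tlvl, Multiset.map_add, Multiset.sum_add, Multiset.map_replicate,
      Multiset.sum_replicate, smul_eq_mul]
    push_cast
    ring
  have hcard : (Multiset.card s : ℤ) = (k : ℤ) + (r : ℤ) := by
    conv_lhs => rw [← hsplit]
    simp [hr_def]
  have hW0 : (0:ℤ) ≤ (s₂.map (fun t => (tval a b t : ℤ))).sum := by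
    apply Multiset.sum_nonneg
    intro x hx
    obtain ⟨u, _, rfl⟩ := Multiset.mem_map.mp hx
    positivity
  have habs2 : |tsum a b s₂| ≤ (s₂.map (fun t => (tval a b t : ℤ))).sum := abs_tsum_le a b s₂
  have hWbound : (tstar.1 : ℤ) * (s₂.map (fun t => (tval a b t : ℤ))).sum
      ≤ (r : ℤ) * ((tval a b tstar : ℤ) - (tstar.1:ℤ)^2 - 1) := by
    rw [← Multiset.sum_map_mul_left]
    apply sum_map_le
    intro u hu
    have hd := dominance a b hb ha hn (hs u (hs₂mem u hu).1) (hs₂lt u hu)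
    have hd' : ((tstar.1:ℤ))^2 + (tstar.1:ℤ) * (tval a b u : ℤ) < (tval a b tstar : ℤ) := by
      exact_mod_cast hd
    linarith
  have hlvl2 : (tlvl s₂ : ℤ) ≤ (r : ℤ) * (tstar.1 : ℤ) := by
    have h0 : (s₂.map (fun t => ((t.1 : ℤ)))).sum ≤ (r : ℤ) * (tstar.1 : ℤ) := by
      apply sum_map_le
      intro u hu
      have h1 := hs₂lt u hu
      have h2 := hs u (hs₂mem u hu).1
      have h3 : u.1 ≤ tstar.1 := by
        rcases u with ⟨i, bi⟩; rcases tstar with ⟨m, bm⟩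
        simp only [tpos] at h1
        simp only at h2 hn ⊢
        cases bi <;> cases bm <;>
          simp only [Bool.false_eq_true, if_true, if_false, ite_true, ite_false] at h1 <;> omega
      exact_mod_cast h3
    refine le_trans (le_of_eq ?_) h0
    simp only [tlvl]
    push_cast
    rw [Multiset.map_map]
    rfl
  have hkV : (k : ℤ) * (tval a b tstar : ℤ) ≤ |tsum a b s| +
      (s₂.map (fun t => (tval a b t : ℤ))).sum := by
    have h1 : |(k : ℤ) * tcon a b tstar| = (k : ℤ) * (tval a b tstar : ℤ) := by
      rw [abs_mul, abs_tcon, Int.abs_natCast]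
    have h2 : (k : ℤ) * tcon a b tstar = tsum a b s - tsum a b s₂ := by
      rw [htsum]; ring
    calc (k : ℤ) * (tval a b tstar : ℤ) = |tsum a b s - tsum a b s₂| := by rw [← h1, h2]
    _ ≤ |tsum a b s| + |tsum a b s₂| := abs_sub _ _
    _ ≤ _ := by linarith
  rw [htlvl, hcard]
  exact arith (tstar.1 : ℤ) (k : ℤ) (r : ℤ) (tval a b tstar : ℤ)
    ((s₂.map (fun t => (tval a b t : ℤ))).sum) (tlvl s₂ : ℤ) |tsum a b s|
    (by exact_mod_cast hn) (by exact_mod_cast hk) (Int.natCast_nonneg _) hVlb hW0 hWbound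
    hlvl2 (Int.natCast_nonneg _) hkV (abs_nonneg _)

end Key

section Cost

def costSet (a b : ℕ → ℕ) (p : ℤ × ℕ) : Set ℝ :=
  { x | ∃ s : Multiset (ℕ × Bool), (∀ t ∈ s, 1 ≤ t.1) ∧ Multiset.card s = p.2 ∧
      x = ((|p.1 - tsum a b s| : ℤ) : ℝ) - ((tlvl s : ℤ) : ℝ) }

noncomputable def cost (a b : ℕ → ℕ) (p : ℤ × ℕ) : ℝ := sInf (costSet a b p)

lemma costSet_nonempty (a b : ℕ → ℕ) (p : ℤ × ℕ) : (costSet a b p).Nonempty := by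
  refine ⟨_, Multiset.replicate p.2 (1, true), fun t ht => ?_, by simp, rfl⟩
  rw [Multiset.eq_of_mem_replicate ht]

section WithKey

variable (a b : ℕ → ℕ)
variable (hkey : ∀ s : Multiset (ℕ × Bool), (∀ t ∈ s, 1 ≤ t.1) →
      (tlvl s : ℤ) ≤ |tsum a b s| + (Multiset.card s : ℤ) ^ 2)

include hkey in
lemma cost_lb (p : ℤ × ℕ) :
    ∀ x ∈ costSet a b p, ((-(|p.1| + (p.2:ℤ)^2) : ℤ) : ℝ) ≤ x := by
  rintro x ⟨s, hs, hcard, rfl⟩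
  have h1 := hkey s hs
  rw [hcard] at h1
  have h2 : |tsum a b s| - |p.1| ≤ |p.1 - tsum a b s| := by
    have := abs_sub_abs_le_abs_sub (tsum a b s) p.1
    rw [abs_sub_comm] at this
    linarith
  have h3 : -(|p.1| + (p.2:ℤ)^2) ≤ |p.1 - tsum a b s| - (tlvl s : ℤ) := by linarith
  have h4 : ((-(|p.1| + (p.2:ℤ)^2) : ℤ) : ℝ) ≤ ((|p.1 - tsum a b s| - (tlvl s : ℤ) : ℤ) : ℝ) := by
    exact_mod_cast h3
  rw [Int.cast_sub] at h4
  exact h4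

include hkey in
lemma costSet_bddBelow (p : ℤ × ℕ) : BddBelow (costSet a b p) :=
  ⟨_, cost_lb a b hkey p⟩

include hkey in
lemma cost_le (p : ℤ × ℕ) (s : Multiset (ℕ × Bool)) (hs : ∀ t ∈ s, 1 ≤ t.1)
    (hcard : Multiset.card s = p.2) :
    cost a b p ≤ ((|p.1 - tsum a b s| : ℤ) : ℝ) - ((tlvl s : ℤ) : ℝ) :=
  csInf_le (costSet_bddBelow a b hkey p) ⟨s, hs, hcard, rfl⟩

include hkey in
lemma le_cost (p : ℤ × ℕ) : ((-(|p.1| + (p.2:ℤ)^2) : ℤ) : ℝ) ≤ cost a b p :=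
  le_csInf (costSet_nonempty a b p) (cost_lb a b hkey p)

include hkey in
lemma cost_subadd (p q : ℤ × ℕ) : cost a b (p + q) ≤ cost a b p + cost a b q := by
  have hstep : ∀ x ∈ costSet a b p, ∀ y ∈ costSet a b q, cost a b (p + q) ≤ x + y := by
    rintro x ⟨s, hs, hcard, rfl⟩ y ⟨s', hs', hcard', rfl⟩
    have hmem : ∀ t ∈ s + s', 1 ≤ t.1 := by
      intro t ht
      rcases Multiset.mem_add.mp ht with h | h
      · exact hs t h
      · exact hs' t h
    have hc : Multiset.card (s + s') = (p + q).2 := by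
      simp [hcard, hcard', Prod.snd_add]
    refine (cost_le a b hkey (p + q) (s + s') hmem hc).trans ?_
    have h1 : tsum a b (s + s') = tsum a b s + tsum a b s' := by
      simp [tsum, Multiset.map_add, Multiset.sum_add]
    have h2 : (tlvl (s + s') : ℤ) = (tlvl s : ℤ) + (tlvl s' : ℤ) := by
      simp [tlvl, Multiset.map_add, Multiset.sum_add]
    have h3 : |(p + q).1 - tsum a b (s + s')| ≤ |p.1 - tsum a b s| + |q.1 - tsum a b s'| := by
      rw [h1, Prod.fst_add]
      calc |p.1 + q.1 - (tsum a b s + tsum a b s')|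
          = |(p.1 - tsum a b s) + (q.1 - tsum a b s')| := by ring_nf
      _ ≤ _ := abs_add_le _ _
    have h4 : ((|(p + q).1 - tsum a b (s + s')| : ℤ) : ℝ) - ((tlvl (s + s') : ℤ) : ℝ)
        ≤ (((|p.1 - tsum a b s| : ℤ) : ℝ) - ((tlvl s : ℤ) : ℝ))
          + (((|q.1 - tsum a b s'| : ℤ) : ℝ) - ((tlvl s' : ℤ) : ℝ)) := by
      rw [h2, Int.cast_add]
      have h3' : ((|(p + q).1 - tsum a b (s + s')| : ℤ) : ℝ)
          ≤ ((|p.1 - tsum a b s| : ℤ) : ℝ) + ((|q.1 - tsum a b s'| : ℤ) : ℝ) := by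
        exact_mod_cast h3
      linarith
    exact h4
  have h5 : ∀ x ∈ costSet a b p, cost a b (p + q) - x ≤ cost a b q := by
    intro x hx
    apply le_csInf (costSet_nonempty a b q)
    intro y hy
    linarith [hstep x hx y hy]
  have h6 : cost a b (p + q) - cost a b q ≤ cost a b p := by
    apply le_csInf (costSet_nonempty a b p)
    intro x hx
    linarith [h5 x hx]
  linarith


include hkey in
lemma cost_zero_le : cost a b (0, 0) ≤ 0 := by
  have h := cost_le a b hkey (0, 0) 0 (by simp) (by simp)
  simpa [tsum, tlvl] using h

include hkey in
lemma cost_T_le : cost a b ((1 : ℤ), 0) ≤ 1 := by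
  have h := cost_le a b hkey ((1 : ℤ), 0) 0 (by simp) (by simp)
  simpa [tsum, tlvl] using h

include hkey in
lemma cost_Tinv_le : cost a b ((-1 : ℤ), 0) ≤ 1 := by
  have h := cost_le a b hkey ((-1 : ℤ), 0) 0 (by simp) (by simp)
  simpa [tsum, tlvl] using h

include hkey in
lemma cost_aZ_le (n : ℕ) (hn : 1 ≤ n) : cost a b ((a n : ℤ), 1) ≤ -(n : ℝ) := by
  have h := cost_le a b hkey ((a n : ℤ), 1) {(n, true)} (by simpa using hn) (by simp)
  simpa [tsum, tlvl, tcon] using h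

include hkey in
lemma cost_bZ_le (n : ℕ) (hn : 1 ≤ n) : cost a b ((-(b n : ℤ)), 1) ≤ -(n : ℝ) := by
  have h := cost_le a b hkey ((-(b n : ℤ)), 1) {(n, false)} (by simpa using hn) (by simp)
  simpa [tsum, tlvl, tcon] using h

include hkey in
lemma neg_sq_le_cost_Z (e : ℕ) : -((e : ℝ))^2 ≤ cost a b ((0 : ℤ), e) := by
  have h := le_cost a b hkey ((0 : ℤ), e)
  push_cast at h
  simpa using h

variable (k : Type*) [NontriviallyNormedField k] [IsUltrametricDist k]
variable (ϖ : k) (hϖ0 : 0 < ‖ϖ‖) (hϖ1 : ‖ϖ‖ < 1)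

noncomputable def good : Subring (AddMonoidAlgebra k (ℤ × ℕ)) where
  carrier := {x | ∀ p : ℤ × ℕ, ‖x.coeff p‖ ≤ ‖ϖ‖ ^ (cost a b p)}
  zero_mem' := by
    intro p
    simp only [AddMonoidAlgebra.coeff_zero, Finsupp.coe_zero, Pi.zero_apply, norm_zero]
    exact (Real.rpow_pos_of_pos hϖ0 _).le
  one_mem' := by
    intro p
    rw [AddMonoidAlgebra.one_def, AddMonoidAlgebra.coeff_single]
    rcases eq_or_ne ((0 : ℤ × ℕ)) p with rfl | hne
    · rw [Finsupp.single_eq_same, norm_one]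
      calc (1:ℝ) = ‖ϖ‖ ^ (0:ℝ) := (Real.rpow_zero _).symm
      _ ≤ ‖ϖ‖ ^ cost a b 0 := Real.rpow_le_rpow_of_exponent_ge hϖ0 hϖ1.le
            (cost_zero_le a b hkey)
    · rw [Finsupp.single_eq_of_ne' hne, norm_zero]
      exact (Real.rpow_pos_of_pos hϖ0 _).le
  add_mem' := by
    intro x y hx hy p
    rw [AddMonoidAlgebra.coeff_add, Finsupp.add_apply]
    exact le_trans (IsUltrametricDist.norm_add_le_max _ _) (max_le (hx p) (hy p))
  neg_mem' := by
    intro x hx p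
    rw [AddMonoidAlgebra.coeff_neg, Finsupp.neg_apply, norm_neg]
    exact hx p
  mul_mem' := by
    classical
    intro x y hx hy p
    rw [AddMonoidAlgebra.coeff_mul, Finsupp.sum]
    apply IsUltrametricDist.norm_sum_le_of_forall_le_of_nonneg
      (Real.rpow_pos_of_pos hϖ0 _).le
    intro p₁ _
    rw [Finsupp.sum]
    apply IsUltrametricDist.norm_sum_le_of_forall_le_of_nonneg
      (Real.rpow_pos_of_pos hϖ0 _).le
    intro p₂ _
    split_ifs with h
    · calc ‖x.coeff p₁ * y.coeff p₂‖ ≤ ‖x.coeff p₁‖ * ‖y.coeff p₂‖ := norm_mul_le _ _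
      _ ≤ ‖ϖ‖ ^ cost a b p₁ * ‖ϖ‖ ^ cost a b p₂ :=
          mul_le_mul (hx p₁) (hy p₂) (norm_nonneg _) (Real.rpow_pos_of_pos hϖ0 _).le
      _ = ‖ϖ‖ ^ (cost a b p₁ + cost a b p₂) := (Real.rpow_add hϖ0 _ _).symm
      _ ≤ ‖ϖ‖ ^ cost a b p := by
          apply Real.rpow_le_rpow_of_exponent_ge hϖ0 hϖ1.le
          rw [← h]
          exact cost_subadd a b hkey p₁ p₂
    · rw [norm_zero]
      exact (Real.rpow_pos_of_pos hϖ0 _).le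

include hkey in
lemma mem_good (x : AddMonoidAlgebra k (ℤ × ℕ)) :
    x ∈ good a b hkey k ϖ hϖ0 hϖ1 ↔ ∀ p : ℤ × ℕ, ‖x.coeff p‖ ≤ ‖ϖ‖ ^ (cost a b p) :=
  Iff.rfl

end WithKey
end Cost
end ZNN

open ZNN in
/-- With rapidly growing sequences `a(n), b(n)` and `R₀ ⊆ k[T,T⁻¹,Z]` the
`𝒪_k`-subalgebra generated by `ϖT`, `ϖT⁻¹`, `ϖ⁻ⁿT^{a(n)}Z`, `ϖ⁻ⁿT^{-b(n)}Z` (`n ≥ 1`),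
for every `e ≥ 1` there exists `M ≥ 0` such that `ϖ^{-M}Zᵉ ∉ R₀`; that is, `Z` is not
nilpotent in the completion. Here `k[T,T⁻¹,Z]` is modelled as the monoid algebra on
`ℤ × ℕ`, with `T = X^{(1,0)}` and `Z = X^{(0,1)}`. -/
theorem Z_not_nilpotent_in_completion
    (k : Type*) [NontriviallyNormedField k] [IsUltrametricDist k] [CompleteSpace k]
    (ϖ : k) (hϖ0 : 0 < ‖ϖ‖) (hϖ1 : ‖ϖ‖ < 1)
    (a b : ℕ → ℕ)
    (ha1 : a 1 = 1)
    (hpos : ∀ n : ℕ, 1 ≤ n → 0 < a n ∧ 0 < b n)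
    (hb : ∀ J : ℕ, 1 ≤ J →
      (∀ j : ℕ, 1 ≤ j → j < J → J ^ 2 + J * b j < b J) ∧
      (∀ i : ℕ, 1 ≤ i → i ≤ J → J ^ 2 + J * a i < b J))
    (ha : ∀ I : ℕ, 2 ≤ I →
      (∀ j : ℕ, 1 ≤ j → j < I → I ^ 2 + I * b j < a I) ∧
      (∀ i : ℕ, 1 ≤ i → i < I → I ^ 2 + I * a i < a I))
    (Z : AddMonoidAlgebra k (ℤ × ℕ))
    (hZ : Z = AddMonoidAlgebra.single ((0 : ℤ), (1 : ℕ)) (1 : k))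
    (R₀ : Subring (AddMonoidAlgebra k (ℤ × ℕ)))
    (hR₀ : R₀ = Subring.closure
      ((algebraMap k (AddMonoidAlgebra k (ℤ × ℕ))) '' {c : k | ‖c‖ ≤ 1} ∪
        {ϖ • AddMonoidAlgebra.single ((1 : ℤ), (0 : ℕ)) (1 : k),
         ϖ • AddMonoidAlgebra.single ((-1 : ℤ), (0 : ℕ)) (1 : k)} ∪
        (Set.range fun n : ℕ =>
          (ϖ⁻¹) ^ (n + 1) •
            AddMonoidAlgebra.single (((a (n + 1) : ℤ)), (1 : ℕ)) (1 : k)) ∪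
        (Set.range fun n : ℕ =>
          (ϖ⁻¹) ^ (n + 1) •
            AddMonoidAlgebra.single ((-(b (n + 1) : ℤ)), (1 : ℕ)) (1 : k)))) :
    ∀ e : ℕ, 1 ≤ e → ∃ M : ℕ, (ϖ⁻¹) ^ M • Z ^ e ∉ R₀ := by
  have hkeyv := ZNN.key a b ha1 hb ha
  intro e he
  refine ⟨e ^ 2 + 1, fun hmem => ?_⟩
  have hsingle : ∀ (v : ℤ × ℕ) (c : k), ‖c‖ ≤ ‖ϖ‖ ^ cost a b v →
      AddMonoidAlgebra.single v c ∈ good a b hkeyv k ϖ hϖ0 hϖ1 := by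
    intro v c hc
    rw [mem_good a b hkeyv k ϖ hϖ0 hϖ1]
    intro p
    rcases eq_or_ne v p with rfl | hne
    · rw [AddMonoidAlgebra.coeff_single, Finsupp.single_eq_same]; exact hc
    · rw [AddMonoidAlgebra.coeff_single, Finsupp.single_eq_of_ne' hne, norm_zero]
      exact (Real.rpow_pos_of_pos hϖ0 _).le
  have hsub : R₀ ≤ good a b hkeyv k ϖ hϖ0 hϖ1 := by
    rw [hR₀]
    apply Subring.closure_le.mpr
    rintro x (((hx | hx) | hx) | hx)
    · obtain ⟨c, hc, rfl⟩ := hx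
      have hrw : (algebraMap k (AddMonoidAlgebra k (ℤ × ℕ))) c =
          AddMonoidAlgebra.single (0 : ℤ × ℕ) c := by
        simp [AddMonoidAlgebra.coe_algebraMap]
      rw [hrw]
      apply hsingle
      calc ‖c‖ ≤ 1 := hc
      _ = ‖ϖ‖ ^ (0 : ℝ) := (Real.rpow_zero _).symm
      _ ≤ ‖ϖ‖ ^ cost a b (0, 0) :=
          Real.rpow_le_rpow_of_exponent_ge hϖ0 hϖ1.le (cost_zero_le a b hkeyv)
    · rcases hx with rfl | hx
      · rw [AddMonoidAlgebra.smul_single', mul_one]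
        apply hsingle
        calc ‖ϖ‖ = ‖ϖ‖ ^ (1 : ℝ) := (Real.rpow_one _).symm
        _ ≤ ‖ϖ‖ ^ cost a b ((1 : ℤ), 0) :=
            Real.rpow_le_rpow_of_exponent_ge hϖ0 hϖ1.le (cost_T_le a b hkeyv)
      · rcases hx with rfl
        rw [AddMonoidAlgebra.smul_single', mul_one]
        apply hsingle
        calc ‖ϖ‖ = ‖ϖ‖ ^ (1 : ℝ) := (Real.rpow_one _).symm
        _ ≤ ‖ϖ‖ ^ cost a b ((-1 : ℤ), 0) :=
            Real.rpow_le_rpow_of_exponent_ge hϖ0 hϖ1.le (cost_Tinv_le a b hkeyv)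
    · obtain ⟨n, rfl⟩ := hx
      beta_reduce
      rw [AddMonoidAlgebra.smul_single', mul_one]
      apply hsingle
      have hnorm : ‖(ϖ⁻¹) ^ (n + 1)‖ = ‖ϖ‖ ^ (-((n : ℝ) + 1)) := by
        rw [norm_pow, norm_inv, inv_pow, Real.rpow_neg hϖ0.le,
          ← Real.rpow_natCast ‖ϖ‖ (n + 1)]
        push_cast
        ring_nf
      rw [hnorm]
      apply Real.rpow_le_rpow_of_exponent_ge hϖ0 hϖ1.le
      have := cost_aZ_le a b hkeyv (n + 1) (Nat.le_add_left 1 n)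
      push_cast at this ⊢
      linarith
    · obtain ⟨n, rfl⟩ := hx
      beta_reduce
      rw [AddMonoidAlgebra.smul_single', mul_one]
      apply hsingle
      have hnorm : ‖(ϖ⁻¹) ^ (n + 1)‖ = ‖ϖ‖ ^ (-((n : ℝ) + 1)) := by
        rw [norm_pow, norm_inv, inv_pow, Real.rpow_neg hϖ0.le,
          ← Real.rpow_natCast ‖ϖ‖ (n + 1)]
        push_cast
        ring_nf
      rw [hnorm]
      apply Real.rpow_le_rpow_of_exponent_ge hϖ0 hϖ1.le
      have := cost_bZ_le a b hkeyv (n + 1) (Nat.le_add_left 1 n)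
      push_cast at this ⊢
      linarith
  have hx := (mem_good a b hkeyv k ϖ hϖ0 hϖ1 _).mp (hsub hmem)
  have hZe : Z ^ e = AddMonoidAlgebra.single ((0 : ℤ), e) (1 : k) := by
    rw [hZ, AddMonoidAlgebra.single_pow, one_pow]
    congr 1
    simp [Prod.smul_mk]
  have hcoeff := hx ((0 : ℤ), e)
  rw [hZe, AddMonoidAlgebra.smul_single', mul_one, AddMonoidAlgebra.coeff_single, Finsupp.single_eq_same] at hcoeff
  have hnorm : ‖(ϖ⁻¹) ^ (e ^ 2 + 1)‖ = ‖ϖ‖ ^ (-((e ^ 2 : ℝ) + 1)) := by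
    rw [norm_pow, norm_inv, inv_pow, Real.rpow_neg hϖ0.le,
      ← Real.rpow_natCast ‖ϖ‖ (e ^ 2 + 1)]
    push_cast
    ring_nf
  rw [hnorm] at hcoeff
  have hle : cost a b ((0 : ℤ), e) ≤ -((e ^ 2 : ℝ) + 1) :=
    (Real.rpow_le_rpow_left_iff_of_base_lt_one hϖ0 hϖ1).mp hcoeff
  have hge := neg_sq_le_cost_Z a b hkeyv e
  nlinarith [hge, hle]
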